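/- Let T be a clique tree of a finite simple graph G, rooted at a node C_r. For any two incomparable nodes C and C' of T, there is no edge of G between a vertex of V(C) and a vertex of V(C'). -/

import Mathlib

variable {V : Type*}

/-- The closed neighborhood `N[x]` of a vertex. -/
def closedNbhd (G : SimpleGraph V) (x : V) : Set V := insert x (G.neighborSet x)

/-- `N[S] = ⋃ x ∈ S, N[x]`. -/
def closedNbhdSet (G : SimpleGraph V) (S : Set V) : Set V := ⋃ x ∈ S, closedNbhd G x

/-- `D` is a dominating set: `N[D] = V`. -/
def IsDomSet (G : SimpleGraph V) (D : Set V) : Prop := closedNbhdSet G D = Set.univ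

/-- Minimal dominating set: dominating, and no proper subset dominates. -/
def IsMinDomSet (G : SimpleGraph V) (D : Set V) : Prop :=
  IsDomSet G D ∧ ∀ D' : Set V, D' ⊂ D → ¬ IsDomSet G D'

/-- Private neighbors of `x` with respect to `D`: `P(D,x) = {y : N[y] ∩ D = {x}}`. -/
def privNbrs (G : SimpleGraph V) (D : Set V) (x : V) : Set V :=
  {y | closedNbhd G y ∩ D = {x}}

/-- Irredundant set: every member has a private neighbor. -/
def IsIrredundant (G : SimpleGraph V) (D : Set V) : Prop :=
  ∀ x ∈ D, (privNbrs G D x).Nonempty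

/-- Maximal clique. -/
def IsMaxClique (G : SimpleGraph V) (C : Set V) : Prop :=
  G.IsClique C ∧ ∀ D : Set V, G.IsClique D → C ⊆ D → C = D

/-- The type of maximal cliques of `G`. -/
abbrev MaxClique (G : SimpleGraph V) := {C : Set V // IsMaxClique G C}

/-- A clique tree of `G`, rooted at `root`: a rooted tree whose nodes are exactly the
maximal cliques of `G` (encoded by a parent function from which every node reaches the
root), such that for each vertex `x` the nodes containing `x` induce a connected
subtree of the tree. -/
structure CliqueTree (G : SimpleGraph V) where
  parent : MaxClique G → MaxClique G
  root : MaxClique G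
  parent_root : parent root = root
  reaches_root : ∀ C : MaxClique G, ∃ n : ℕ, parent^[n] C = root
  vertex_subtree : ∀ x : V,
    ((SimpleGraph.fromRel fun C C' : MaxClique G => parent C = C').induce
      {C : MaxClique G | x ∈ C.1}).Connected

variable {G : SimpleGraph V}

open Classical in
/-- `f(C) := C ∖ Pa(C)` for non-root `C`, and `f(C_r) := C_r`. -/
noncomputable def fC (T : CliqueTree G) (C : MaxClique G) : Set V :=
  if C = T.root then C.1 else C.1 \ (T.parent C).1

/-- `IsAnc T A B` : `A` is an ancestor of `B` (i.e. `B ⪯ A`), namely `A` lies on the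
path from the root to `B`. -/
def IsAnc (T : CliqueTree G) (A B : MaxClique G) : Prop :=
  ∃ n : ℕ, T.parent^[n] B = A

/-- `V(C) := ⋃_{C' ⪯ C} f(C')`. -/
noncomputable def Vsub (T : CliqueTree G) (C : MaxClique G) : Set V :=
  ⋃ C' ∈ {C' : MaxClique G | IsAnc T C C'}, fC T C'


lemma isAnc_trans {T : CliqueTree G} {A B D : MaxClique G}
    (hAB : IsAnc T A B) (hBD : IsAnc T B D) : IsAnc T A D := by
  obtain ⟨n, hn⟩ := hAB
  obtain ⟨m, hm⟩ := hBD
  exact ⟨n + m, by rw [Function.iterate_add_apply, hm, hn]⟩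

lemma isAnc_root_iff {T : CliqueTree G} {A : MaxClique G} (h : IsAnc T A T.root) :
    A = T.root := by
  obtain ⟨n, hn⟩ := h
  rw [Function.iterate_fixed T.parent_root] at hn
  exact hn.symm

/-- If a common descendant exists, the two nodes are comparable. -/
lemma comparable_of_common {T : CliqueTree G} {A B M : MaxClique G}
    (hA : IsAnc T A M) (hB : IsAnc T B M) : IsAnc T A B ∨ IsAnc T B A := by
  obtain ⟨n, hn⟩ := hA
  obtain ⟨m, hm⟩ := hB
  rcases le_total n m with h | h
  · right
    refine ⟨m - n, ?_⟩
    rw [← hn, ← Function.iterate_add_apply, Nat.sub_add_cancel h, hm]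
  · left
    refine ⟨n - m, ?_⟩
    rw [← hm, ← Function.iterate_add_apply, Nat.sub_add_cancel h, hn]

/-- Key subtree lemma: if `x ∈ D` but `x ∉ parent D`, then every maximal clique
containing `x` is a descendant of `D`. -/
lemma subtree_below {T : CliqueTree G} {x : V} {D M : MaxClique G}
    (hxD : x ∈ D.1) (hxP : x ∉ (T.parent D).1) (hxM : x ∈ M.1) : IsAnc T D M := by
  set W := ((SimpleGraph.fromRel fun C C' : MaxClique G => T.parent C = C').induce
      {C : MaxClique G | x ∈ C.1}) with hW
  have hconn := T.vertex_subtree x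
  have hreach : W.Reachable ⟨D, hxD⟩ ⟨M, hxM⟩ := hconn.preconnected _ _
  obtain ⟨w⟩ := hreach
  have key : ∀ (a b : {C : MaxClique G | x ∈ C.1}) (_ : W.Walk a b),
      IsAnc T D a.1 → IsAnc T D b.1 := by
    intro a b w
    induction w with
    | nil => exact id
    | @cons u v p hadj pw ih =>
      intro hu
      apply ih
      have hadj' : u.1 ≠ v.1 ∧ (T.parent u.1 = v.1 ∨ T.parent v.1 = u.1) := by
        simpa [hW, SimpleGraph.fromRel_adj] using hadj
      obtain ⟨hne, hcase | hcase⟩ := hadj'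
      · -- v = parent u
        obtain ⟨n, hn⟩ := hu
        cases n with
        | zero =>
          simp only [Function.iterate_zero, id_eq] at hn
          exfalso
          apply hxP
          rw [← hn, hcase]
          exact v.2
        | succ k =>
          exact ⟨k, by rw [← hcase, ← Function.iterate_succ_apply]; exact hn⟩
      · -- u = parent v
        obtain ⟨n, hn⟩ := hu
        exact ⟨n + 1, by rw [Function.iterate_succ_apply, hcase, hn]⟩
  exact key _ _ w ⟨0, rfl⟩

lemma exists_maxClique_containing [Fintype V] {G : SimpleGraph V} {x y : V}
    (hadj : G.Adj x y) : ∃ M : MaxClique G, x ∈ M.1 ∧ y ∈ M.1 := by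
  classical
  have hfin : ({D : Set V | G.IsClique D ∧ x ∈ D ∧ y ∈ D}).Finite := Set.toFinite _
  have hne : ({D : Set V | G.IsClique D ∧ x ∈ D ∧ y ∈ D}).Nonempty := by
    refine ⟨{x, y}, ?_, by simp, by simp⟩
    exact SimpleGraph.isClique_pair.mpr fun _ => hadj
  obtain ⟨A, hA, hAmax⟩ := Set.Finite.exists_maximal hfin hne
  obtain ⟨hAcl, hxA, hyA⟩ := hA
  refine ⟨⟨A, hAcl, fun E hE hsub => ?_⟩, hxA, hyA⟩
  have := hAmax (y := E) ⟨hE, hsub hxA, hsub hyA⟩ hsub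
  exact le_antisymm hsub this

lemma mem_of_vsub {T : CliqueTree G} {C : MaxClique G} {x : V}
    (hx : x ∈ Vsub T C) (hroot : C ≠ T.root) :
    ∃ D : MaxClique G, IsAnc T C D ∧ x ∈ D.1 ∧ x ∉ (T.parent D).1 := by
  simp only [Vsub, Set.mem_iUnion] at hx
  obtain ⟨D, hD, hxD⟩ := hx
  have hDroot : D ≠ T.root := by
    rintro rfl
    exact hroot (isAnc_root_iff hD)
  rw [fC, if_neg hDroot] at hxD
  exact ⟨D, hD, hxD.1, hxD.2⟩

/-- For incomparable nodes `C`, `C'` of the clique tree there is no edge between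
`V(C)` and `V(C')`. -/
theorem stmt4 {V : Type*} [Fintype V] (G : SimpleGraph V) (T : CliqueTree G)
    (C C' : MaxClique G) (h1 : ¬ IsAnc T C C') (h2 : ¬ IsAnc T C' C) :
    ∀ x ∈ Vsub T C, ∀ y ∈ Vsub T C', ¬ G.Adj x y := by
  intro x hx y hy hadj
  have hCroot : C ≠ T.root := by
    rintro rfl
    exact h1 (T.reaches_root C')
  have hC'root : C' ≠ T.root := by
    rintro rfl
    exact h2 (T.reaches_root C)
  obtain ⟨D, hCD, hxD, hxPD⟩ := mem_of_vsub hx hCroot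
  obtain ⟨D', hCD', hyD, hyPD⟩ := mem_of_vsub hy hC'root
  obtain ⟨M, hxM, hyM⟩ := exists_maxClique_containing hadj
  have hDM : IsAnc T D M := subtree_below hxD hxPD hxM
  have hD'M : IsAnc T D' M := subtree_below hyD hyPD hyM
  have hCM : IsAnc T C M := isAnc_trans hCD hDM
  have hC'M : IsAnc T C' M := isAnc_trans hCD' hD'M
  rcases comparable_of_common hCM hC'M with h | h
  · exact h1 h
  · exact h2 h
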